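/- arXiv:1505.02713 — 3 statements merged into one kernel-verified Lean document; each statement's English description precedes it below -/
import Mathlib

section
/- Let k ≥ 2 be an integer, m an integer with 1 ≤ m ≤ k−1, and w an integer with gcd(w,k) = 1. Then there is no continuous function φ : ℝ → ℝ such that φ(t+1) = φ(t) + w for all t ∈ ℝ and φ(t + m/k) − φ(t) ∈ ℤ for all t ∈ ℝ. -/
/-- Let `k ≥ 2` be an integer, `m` an integer with `1 ≤ m ≤ k−1`, and `w` an
integer with `gcd(w,k) = 1`. Then there is no continuous function `φ : ℝ → ℝ` such that
`φ(t+1) = φ(t) + w` for all `t ∈ ℝ` and `φ(t + m/k) − φ(t) ∈ ℤ` for all `t ∈ ℝ`. -/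
theorem no_continuous_lift_with_rational_integer_shifts
    (k m w : ℤ) (hk : 2 ≤ k) (hm1 : 1 ≤ m) (hm2 : m ≤ k - 1) (hw : Int.gcd w k = 1) :
    ¬ ∃ φ : ℝ → ℝ, Continuous φ ∧ (∀ t : ℝ, φ (t + 1) = φ t + (w : ℝ)) ∧
      (∀ t : ℝ, ∃ j : ℤ, φ (t + (m : ℝ) / (k : ℝ)) - φ t = (j : ℝ)) := by
  rintro ⟨φ, hc, h1, h2⟩
  have hk0 : (k : ℝ) ≠ 0 := by
    have : (2 : ℝ) ≤ (k : ℝ) := by exact_mod_cast hk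
    linarith
  set d : ℝ := (m : ℝ) / (k : ℝ) with hd
  set g : ℝ → ℝ := fun s => φ (s + d) - φ s with hg
  have hgc : Continuous g := (hc.comp (by continuity)).sub hc
  obtain ⟨j₀, hj₀⟩ := h2 0
  -- g is constantly j₀
  have key : ∀ t : ℝ, g t = (j₀ : ℝ) := by
    intro t
    obtain ⟨j, hj⟩ := h2 t
    have hjt : g t = (j : ℝ) := hj
    rw [hjt]
    by_contra hne
    have hjne : j ≠ j₀ := by
      intro h; exact hne (by rw [h])
    -- find a non-integer value in the range of g
    have half : ∃ s : ℝ, ∃ c : ℤ, g s = (c : ℝ) + 1 / 2 := by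
      rcases lt_or_gt_of_ne hjne with h | h
      · have h1' : (j : ℝ) + 1 ≤ (j₀ : ℝ) := by exact_mod_cast Int.add_one_le_iff.mpr h
        have hmem : ((j : ℤ) : ℝ) + 1 / 2 ∈ Set.Icc (g t) (g 0) := by
          rw [hjt, show g 0 = (j₀ : ℝ) from hj₀]
          exact ⟨by linarith, by linarith⟩
        obtain ⟨s, hs⟩ := intermediate_value_univ t 0 hgc hmem
        exact ⟨s, j, hs⟩
      · have h1' : (j₀ : ℝ) + 1 ≤ (j : ℝ) := by exact_mod_cast Int.add_one_le_iff.mpr h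
        have hmem : ((j₀ : ℤ) : ℝ) + 1 / 2 ∈ Set.Icc (g 0) (g t) := by
          rw [hjt, show g 0 = (j₀ : ℝ) from hj₀]
          exact ⟨by linarith, by linarith⟩
        obtain ⟨s, hs⟩ := intermediate_value_univ 0 t hgc hmem
        exact ⟨s, j₀, hs⟩
    obtain ⟨s, c, hs⟩ := half
    obtain ⟨j', hj'⟩ := h2 s
    have hj's : g s = (j' : ℝ) := hj'
    rw [hj's] at hs
    have : ((2 * (j' - c) : ℤ) : ℝ) = 1 := by push_cast; linarith
    have h2' : (2 * (j' - c) : ℤ) = 1 := by exact_mod_cast this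
    omega
  -- telescoping along steps of size d
  have tele : ∀ n : ℕ, φ ((n : ℝ) * d) = φ 0 + (n : ℝ) * (j₀ : ℝ) := by
    intro n
    induction n with
    | zero => simp
    | succ n ih =>
      have := key ((n : ℝ) * d)
      have hgn : φ ((n : ℝ) * d + d) - φ ((n : ℝ) * d) = (j₀ : ℝ) := this
      push_cast
      have : ((n : ℝ) + 1) * d = (n : ℝ) * d + d := by ring
      rw [this]
      rw [ih] at hgn
      linarith
  -- telescoping along steps of size 1
  have tele1 : ∀ n : ℕ, φ (n : ℝ) = φ 0 + (n : ℝ) * (w : ℝ) := by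
    intro n
    induction n with
    | zero => simp
    | succ n ih =>
      have := h1 (n : ℝ)
      push_cast
      rw [this, ih]; ring
  have hkd : (k.toNat : ℝ) * d = (m.toNat : ℝ) := by
    rw [hd]
    have hk' : (k.toNat : ℝ) = (k : ℝ) := by exact_mod_cast Int.toNat_of_nonneg (by omega)
    have hm' : (m.toNat : ℝ) = (m : ℝ) := by exact_mod_cast Int.toNat_of_nonneg (by omega)
    rw [hk', hm']
    field_simp
  have e1 := tele k.toNat
  rw [hkd, tele1 m.toNat] at e1
  have hk' : (k.toNat : ℝ) = (k : ℝ) := by exact_mod_cast Int.toNat_of_nonneg (by omega)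
  have hm' : (m.toNat : ℝ) = (m : ℝ) := by exact_mod_cast Int.toNat_of_nonneg (by omega)
  rw [hk', hm'] at e1
  have emw : ((m * w : ℤ) : ℝ) = ((k * j₀ : ℤ) : ℝ) := by push_cast; linarith
  have emw' : m * w = k * j₀ := by exact_mod_cast emw
  have hdvd : k ∣ m * w := ⟨j₀, emw'⟩
  have hcop : IsCoprime k w := by
    rw [Int.isCoprime_iff_gcd_eq_one, Int.gcd_comm]; exact hw
  have : k ∣ m := hcop.dvd_of_dvd_mul_right hdvd
  have := Int.le_of_dvd (by omega) this
  omega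
end

section
/- Let μ ∈ ℝ and c ∈ ℝ, and let v, u ∈ ℂ with v ≠ 0 and 2v² ≠ 1. Set q = 2v² and p = u/\bar{v}, and write q = q₁ + iq₂, p = p₁ + ip₂, v = v₁ + iv₂, u = u₁ + iu₂ with real components. Define H_μ(q,p) = |p|²/2 + q₁p₂ − p₁q₂ − μp₂ − (1−μ)/|q| − μ/|q−1|. Then |v|²·(H_μ(q,p) + c) = |u|²/2 + 2|v|²(v₁u₂ − v₂u₁) − μ(u₁v₂ + u₂v₁) − (1−μ)/2 − μ|v|²/|2v² − 1| + c|v|². -/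
set_option maxHeartbeats 1000000 in
/-- The Levi–Civita regularization identity for the planar circular
restricted three-body problem: with `q = 2v²`, `p = u/conj v`,
`H_μ(q,p) = |p|²/2 + q₁p₂ − p₁q₂ − μp₂ − (1−μ)/|q| − μ/|q−1|`, one has
`|v|²(H_μ(q,p) + c) = |u|²/2 + 2|v|²(v₁u₂ − v₂u₁) − μ(u₁v₂ + u₂v₁) − (1−μ)/2
  − μ|v|²/|2v² − 1| + c|v|²`. -/
theorem levi_civita_regularized_hamiltonian (μ c : ℝ) (v u : ℂ)
    (hv : v ≠ 0) (hq : 2 * v ^ 2 ≠ 1) :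
    ‖v‖ ^ 2 *
        ((‖u / (starRingEnd ℂ) v‖ ^ 2 / 2
          + (2 * v ^ 2).re * (u / (starRingEnd ℂ) v).im
          - (u / (starRingEnd ℂ) v).re * (2 * v ^ 2).im
          - μ * (u / (starRingEnd ℂ) v).im
          - (1 - μ) / ‖2 * v ^ 2‖
          - μ / ‖2 * v ^ 2 - 1‖) + c) =
      ‖u‖ ^ 2 / 2
        + 2 * ‖v‖ ^ 2 * (v.re * u.im - v.im * u.re)
        - μ * (u.re * v.im + u.im * v.re)
        - (1 - μ) / 2
        - μ * ‖v‖ ^ 2 / ‖2 * v ^ 2 - 1‖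
        + c * ‖v‖ ^ 2 := by
  have hA : ‖2 * v ^ 2 - 1‖ ≠ 0 := by
    simpa [sub_eq_zero] using hq
  have hv2 : Complex.normSq v ≠ 0 := ne_of_gt (Complex.normSq_pos.mpr hv)
  obtain ⟨A, hAe⟩ : ∃ A, ‖2 * v ^ 2 - 1‖ = A := ⟨_, rfl⟩
  rw [hAe] at hA ⊢
  rw [show ‖2 * v ^ 2‖ = 2 * ‖v‖ ^ 2 by
    simp [map_mul, map_pow]]
  have hre : (v ^ 2).re = v.re * v.re - v.im * v.im := by simp [pow_two, Complex.mul_re]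
  have him : (v ^ 2).im = v.re * v.im + v.im * v.re := by simp [pow_two, Complex.mul_im]
  simp only [hre, him, Complex.sq_norm, Complex.normSq_div, Complex.normSq_conj,
    Complex.div_re, Complex.div_im, Complex.mul_re,
    Complex.mul_im, Complex.conj_re, Complex.conj_im, Complex.normSq_apply,
    Complex.re_ofNat, Complex.im_ofNat]
  have hv2' : v.re * v.re + v.im * v.im ≠ 0 := by
    simpa [Complex.normSq_apply] using hv2
  have hv2'' : v.re ^ 2 + v.im ^ 2 ≠ 0 := by simpa [sq] using hv2'
  field_simp
  ring
end

section
/- Assume (K_n) has the asymptotic convergence property towards K^∞. Then for all integers β₁, β₂ ≥ 0 there exist numbers s* ≥ 0, n* ≥ 1 and M > 0 such that |∂_s^{β₁}∂_t^{β₂}K_n(s,t)| ≤ M for all s ≥ s*, all n ≥ n*, and all t ∈ ℝ/ℤ. -/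
open Filter Function
open scoped RealInnerProductSpace Topology

/-- `ℝ^{2m}` with its Euclidean structure. -/
abbrev E2 (m : ℕ) : Type := EuclideanSpace ℝ (Fin (2 * m))

/-- The partial derivative `∂_s^{β₁} ∂_t^{β₂} f` of a map of two real variables. -/
noncomputable def pDeriv {X : Type*} [NormedAddCommGroup X] [NormedSpace ℝ X]
    (β₁ β₂ : ℕ) (f : ℝ → ℝ → X) : ℝ → ℝ → X :=
  fun s t => iteratedDeriv β₁ (fun s' => iteratedDeriv β₂ (f s') t) s

/-- The standard complex structure `J₀` on `ℝ^{2m}`, i.e. the `2m×2m` matrix with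
`m×m` blocks `[[0, −I],[I, 0]]`, as a continuous linear endomorphism of `ℝ^{2m}`. -/
noncomputable def J0 (m : ℕ) : E2 m →L[ℝ] E2 m :=
  Matrix.toEuclideanCLM (𝕜 := ℝ)
    (Matrix.of fun i j : Fin (2 * m) =>
      if (i : ℕ) < m ∧ (j : ℕ) = (i : ℕ) + m then (-1 : ℝ)
      else if m ≤ (i : ℕ) ∧ (j : ℕ) + m = (i : ℕ) then 1 else 0)

/-- The `L²(ℝ/ℤ, ℝ^{2m})` norm of a (1-periodic) map, `‖f‖ = (∫₀¹|f(t)|²dt)^{1/2}`. -/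
noncomputable def l2norm {m : ℕ} (f : ℝ → E2 m) : ℝ :=
  Real.sqrt (∫ t in (0:ℝ)..1, ‖f t‖ ^ 2)

/-- The asymptotic convergence property of a family `(K_n)` towards `K^∞`: for every pair of
sequences `n_l → ∞`, `s_l → ∞` there exist a subsequence `l_k` and a constant `c ∈ [0,1)`
such that all partial derivatives of `K_{n_{l_k}}(s,t) − K^∞(t+c)` at `s = s_{l_k}` tend to `0`
uniformly in `t` as `k → ∞`. -/
def AsympConv {m : ℕ} (K : ℕ → ℝ → ℝ → (E2 m →L[ℝ] E2 m))
    (Kinf : ℝ → (E2 m →L[ℝ] E2 m)) : Prop :=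
  ∀ nl : ℕ → ℕ, ∀ sl : ℕ → ℝ, Tendsto nl atTop atTop → Tendsto sl atTop atTop →
    ∃ lk : ℕ → ℕ, ∃ c : ℝ, StrictMono lk ∧ 0 ≤ c ∧ c < 1 ∧
      ∀ β₁ β₂ : ℕ, ∀ ε > 0, ∃ k₀ : ℕ, ∀ k ≥ k₀, ∀ t : ℝ,
        ‖pDeriv β₁ β₂ (fun s u => K (nl (lk k)) s u - Kinf (u + c)) (sl (lk k)) t‖ ≤ ε

/-- `ν` is an eigenvalue of `L = −J₀ d/dt − K^∞` if there is a nonzero `C¹` 1-periodic map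
`e : ℝ → ℝ^{2m}` with `−J₀e'(t) − K^∞(t)e(t) = ν e(t)` for all `t`. -/
def IsEigenvalue {m : ℕ} (Kinf : ℝ → (E2 m →L[ℝ] E2 m)) (ν : ℝ) : Prop :=
  ∃ e : ℝ → E2 m, ContDiff ℝ 1 e ∧ (∀ t, e (t + 1) = e t) ∧ (∃ t, e t ≠ 0) ∧
    ∀ t : ℝ, -(J0 m) (deriv e t) - Kinf t (e t) = ν • e t


section Aux

variable {F : Type*} [NormedAddCommGroup F] [NormedSpace ℝ F]

lemma iteratedDeriv_add'' {n : ℕ} {f g : ℝ → F} (hf : ContDiff ℝ n f) (hg : ContDiff ℝ n g)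
    (x : ℝ) :
    iteratedDeriv n (fun y => f y + g y) x = iteratedDeriv n f x + iteratedDeriv n g x := by
  simp only [← iteratedDerivWithin_univ]
  exact iteratedDerivWithin_add (Set.mem_univ x) uniqueDiffOn_univ hf.contDiffWithinAt hg.contDiffWithinAt

lemma iteratedDeriv_add_const'' {n : ℕ} {f : ℝ → F} (c : F) (x : ℝ) (hn : n ≠ 0) :
    iteratedDeriv n (fun y => f y + c) x = iteratedDeriv n f x := by
  obtain ⟨k, rfl⟩ := Nat.exists_eq_succ_of_ne_zero hn
  rw [iteratedDeriv_succ', iteratedDeriv_succ']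
  congr 1
  exact funext fun y => deriv_add_const c

end Aux

/-- Lemma B.3. Under the asymptotic convergence property, for all
`β₁, β₂ ≥ 0` there exist `s* ≥ 0`, `n* ≥ 1` and `M > 0` such that
`|∂_s^{β₁}∂_t^{β₂}K_n(s,t)| ≤ M` for all `s ≥ s*`, `n ≥ n*` and `t ∈ ℝ/ℤ`. -/
theorem uniform_asymptotic_derivative_bounds {m : ℕ} (hm : 1 ≤ m)
    (K : ℕ → ℝ → ℝ → (E2 m →L[ℝ] E2 m)) (Kinf : ℝ → (E2 m →L[ℝ] E2 m))
    (hKsmooth : ∀ n, ContDiff ℝ (⊤ : ℕ∞) (uncurry (K n)))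
    (hKper : ∀ n, ∀ s t : ℝ, K n s (t + 1) = K n s t)
    (hKinfsmooth : ContDiff ℝ (⊤ : ℕ∞) Kinf)
    (hKinfper : ∀ t : ℝ, Kinf (t + 1) = Kinf t)
    (hKinfsym : ∀ t : ℝ, ContinuousLinearMap.adjoint (Kinf t) = Kinf t)
    (hconv : AsympConv K Kinf) :
    ∀ β₁ β₂ : ℕ, ∃ sstar : ℝ, 0 ≤ sstar ∧ ∃ nstar : ℕ, 1 ≤ nstar ∧ ∃ M : ℝ, 0 < M ∧
      ∀ s ≥ sstar, ∀ n ≥ nstar, ∀ t : ℝ, ‖pDeriv β₁ β₂ (K n) s t‖ ≤ M := by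
  intro β₁ β₂
  by_contra hcon
  push_neg at hcon
  -- build sequences
  have H : ∀ l : ℕ, ∃ s, (l : ℝ) ≤ s ∧ ∃ n, l + 1 ≤ n ∧ ∃ t,
      (l : ℝ) + 1 < ‖pDeriv β₁ β₂ (K n) s t‖ := by
    intro l
    obtain ⟨s, hs, n, hn, t, ht⟩ := hcon (l : ℝ) (Nat.cast_nonneg l) (l + 1)
      (Nat.le_add_left 1 l) ((l : ℝ) + 1) (by positivity)
    exact ⟨s, hs, n, hn, t, ht⟩
  choose sl hsl nl hnl tl htl using H
  have hntop : Tendsto nl atTop atTop :=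
    tendsto_atTop_mono (fun l => (Nat.le_succ l).trans (hnl l)) tendsto_id
  have hstop : Tendsto sl atTop atTop :=
    tendsto_atTop_mono hsl tendsto_natCast_atTop_atTop
  obtain ⟨lk, c, hmono, hc0, hc1, hlim⟩ := hconv nl sl hntop hstop
  obtain ⟨k₀, hk₀⟩ := hlim β₁ β₂ 1 one_pos
  -- bound for the iterated derivative of Kinf
  set g : ℝ → (E2 m →L[ℝ] E2 m) := iteratedDeriv β₂ Kinf with hg
  have hgcont : Continuous g := hKinfsmooth.continuous_iteratedDeriv β₂ (by exact_mod_cast le_top)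
  have hgper : Function.Periodic g 1 := by
    intro x
    have : (fun u => Kinf (u + 1)) = Kinf := funext hKinfper
    calc g (x + 1) = iteratedDeriv β₂ (fun u => Kinf (u + 1)) x := by
          rw [iteratedDeriv_comp_add_const]
      _ = g x := by rw [this]
  obtain ⟨C, hC⟩ := (isCompact_Icc (a := (0:ℝ)) (b := 1)).exists_bound_of_continuousOn
    hgcont.continuousOn
  have hCg : ∀ x : ℝ, ‖g x‖ ≤ C := by
    intro x
    have h1 : g (Int.fract x) = g x := by
      have h2 := hgper.sub_int_mul_eq (x := x) ⌊x⌋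
      rw [mul_one] at h2
      exact h2
    rw [← h1]
    exact hC _ ⟨Int.fract_nonneg x, (Int.fract_lt_one x).le⟩
  have hC0 : 0 ≤ C := le_trans (norm_nonneg _) (hCg 0)
  -- decomposition of pDeriv
  have hshift : ContDiff ℝ (⊤ : ℕ∞) (fun u : ℝ => Kinf (u + c)) :=
    hKinfsmooth.comp (contDiff_id.add contDiff_const)
  have key : ∀ n : ℕ, ∀ s t : ℝ,
      pDeriv β₁ β₂ (K n) s t =
        pDeriv β₁ β₂ (fun s u => K n s u - Kinf (u + c)) s t +
          (if β₁ = 0 then g (t + c) else 0) := by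
    intro n s t
    have hKs : ∀ s' : ℝ, ContDiff ℝ (⊤ : ℕ∞) (fun u => K n s' u) :=
      fun s' => (hKsmooth n).comp (contDiff_const.prodMk contDiff_id)
    have hdiff : ∀ s' : ℝ, ContDiff ℝ (⊤ : ℕ∞) (fun u => K n s' u - Kinf (u + c)) :=
      fun s' => (hKs s').sub hshift
    have inner : ∀ s' : ℝ,
        iteratedDeriv β₂ (fun u => K n s' u) t =
          iteratedDeriv β₂ (fun u => K n s' u - Kinf (u + c)) t + g (t + c) := by
      intro s'
      have e1 : (fun u => K n s' u) =
          fun u => (K n s' u - Kinf (u + c)) + Kinf (u + c) := by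
        funext u; abel
      rw [e1, iteratedDeriv_add'' ((hdiff s').of_le (by exact_mod_cast le_top)) (hshift.of_le (by exact_mod_cast le_top))]
      congr 1
      have := iteratedDeriv_comp_add_const β₂ Kinf c
      rw [this]
    unfold pDeriv
    rcases Nat.eq_zero_or_pos β₁ with h0 | hpos
    · subst h0
      simp only [iteratedDeriv_zero, if_pos rfl]
      exact inner s
    · have hne : β₁ ≠ 0 := hpos.ne'
      rw [if_neg hne, add_zero]
      have e2 : (fun s' => iteratedDeriv β₂ (fun u => K n s' u) t) =
          fun s' => iteratedDeriv β₂ (fun u => K n s' u - Kinf (u + c)) t + g (t + c) :=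
        funext inner
      rw [e2, iteratedDeriv_add_const'' (g (t + c)) s hne]
  -- contradiction
  set k : ℕ := max k₀ (⌈C⌉₊ + 1) with hk
  have hkk₀ : k₀ ≤ k := le_max_left _ _
  have hlkk : k ≤ lk k := hmono.le_apply
  have hsmall := hk₀ k hkk₀ (tl (lk k))
  have hbig := htl (lk k)
  rw [key (nl (lk k)) (sl (lk k)) (tl (lk k))] at hbig
  have hub : ‖pDeriv β₁ β₂ (fun s u => K (nl (lk k)) s u - Kinf (u + c)) (sl (lk k)) (tl (lk k)) +
      (if β₁ = 0 then g (tl (lk k) + c) else 0)‖ ≤ 1 + C := by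
    refine (norm_add_le _ _).trans (add_le_add hsmall ?_)
    split
    · exact hCg _
    · rw [norm_zero]; exact hC0
  have hCk : C ≤ (k : ℝ) := by
    have h1 : (⌈C⌉₊ : ℝ) ≤ (k : ℝ) := by
      exact_mod_cast le_trans (Nat.le_succ _) (le_max_right k₀ (⌈C⌉₊ + 1))
    exact (Nat.le_ceil C).trans h1
  have hklk : (k : ℝ) ≤ (lk k : ℝ) := by exact_mod_cast hlkk
  linarith
end
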